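/- Let P_fwd, P_rev : ℝ → ℝ, β > 0, ΔF ∈ ℝ. Assume: (i) P_fwd(W) ≥ 0 and P_rev(W) ≥ 0 for all W; (ii) Crooks' theorem holds pointwise: P_fwd(W) = exp(β·(W − ΔF)) · P_rev(−W) for all W ∈ ℝ; (iii) the support S := { W : P_fwd(W) ≠ 0 } is nonempty and bounded. Then the worst-case forfeited work equals (1/β) times the order-∞ Rényi divergence of P_rev(−W) from P_fwd(W): ΔF − (sInf S) = (1/β) · Real.log (sInf { λ : ℝ | ∀ W, P_rev(−W) ≤ λ · P_fwd(W) }). -/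

import Mathlib

/-- **Worst-case forfeited work from work distributions (Eq. (22) of the
paper).** If the forward and reverse work distributions `Pf`, `Pr` are
nonnegative and satisfy Crooks' theorem `Pf W = exp (β (W − ΔF)) * Pr (−W)`
pointwise, and the set `S = {W | Pf W ≠ 0}` of possible work values is nonempty
and bounded, then the worst-case forfeited work `ΔF − sInf S` equals `(1/β)`
times the order-∞ Rényi divergence
`D_∞(Pr(−W) ‖ Pf(W)) = log (sInf {λ | ∀ W, Pr (−W) ≤ λ * Pf W})`. -/
theorem worst_case_forfeited_work_eq_renyi_div_work_dist
    (Pf Pr : ℝ → ℝ) (β ΔF : ℝ) (hβ : 0 < β)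
    (hPf : ∀ w, 0 ≤ Pf w) (hPr : ∀ w, 0 ≤ Pr w)
    (hCrooks : ∀ w, Pf w = Real.exp (β * (w - ΔF)) * Pr (-w))
    (hne : {w : ℝ | Pf w ≠ 0}.Nonempty)
    (hbdd : Bornology.IsBounded {w : ℝ | Pf w ≠ 0}) :
    ΔF - sInf {w : ℝ | Pf w ≠ 0}
      = (1 / β) * Real.log (sInf {l : ℝ | ∀ w, Pr (-w) ≤ l * Pf w}) := by
  set S := {w : ℝ | Pf w ≠ 0} with hS
  have hbb : BddBelow S := hbdd.bddBelow
  set m := sInf S with hm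
  set c := Real.exp (β * (ΔF - m)) with hc
  have hPrEq : ∀ w, Pr (-w) = Real.exp (β * (ΔF - w)) * Pf w := by
    intro w
    rw [hCrooks w, ← mul_assoc, ← Real.exp_add]
    have h0 : β * (ΔF - w) + β * (w - ΔF) = 0 := by ring
    rw [h0, Real.exp_zero, one_mul]
  have hsetEq : {l : ℝ | ∀ w, Pr (-w) ≤ l * Pf w} = Set.Ici c := by
    ext l
    simp only [Set.mem_setOf_eq, Set.mem_Ici]
    constructor
    · intro hl
      have key : ∀ w ∈ S, Real.exp (β * (ΔF - w)) ≤ l := by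
        intro w hw
        have hwpos : 0 < Pf w := (hPf w).lt_of_ne (Ne.symm hw)
        have := hl w
        rw [hPrEq w] at this
        exact (mul_le_mul_iff_of_pos_right hwpos).mp this
      obtain ⟨w0, hw0⟩ := hne
      have hl0 : 0 < l := lt_of_lt_of_le (Real.exp_pos _) (key w0 hw0)
      have hlow : ΔF - Real.log l / β ≤ m := by
        apply le_csInf ⟨w0, hw0⟩
        intro w hw
        have h2 : β * (ΔF - w) ≤ Real.log l :=
          (Real.le_log_iff_exp_le hl0).mpr (key w hw)
        have h3 : β * (Real.log l / β) = Real.log l := by field_simp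
        nlinarith
      have : β * (ΔF - m) ≤ Real.log l := by
        have hβ' : β ≠ 0 := hβ.ne'
        have := mul_le_mul_of_nonneg_left hlow hβ.le
        calc β * (ΔF - m) ≤ β * (Real.log l / β) := by nlinarith
          _ = Real.log l := by field_simp
      calc c ≤ Real.exp (Real.log l) := Real.exp_le_exp.mpr this
        _ = l := Real.exp_log hl0
    · intro hl w
      by_cases hw : Pf w = 0
      · have hPr0 : Pr (-w) = 0 := by
          have := hPrEq w
          rw [hw, mul_zero] at this
          exact this
        rw [hPr0, hw, mul_zero]
      · have hwS : w ∈ S := hw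
        have hmw : m ≤ w := csInf_le hbb hwS
        have hexp : Real.exp (β * (ΔF - w)) ≤ c := by
          apply Real.exp_le_exp.mpr
          nlinarith
        rw [hPrEq w]
        have hcl : c * Pf w ≤ l * Pf w :=
          mul_le_mul_of_nonneg_right hl (hPf w)
        have := mul_le_mul_of_nonneg_right hexp (hPf w)
        linarith
  rw [hsetEq, csInf_Ici, hc, Real.log_exp]
  field_simp
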